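/- Assume Σ_{j=0}^∞ 1/(λ_j π_j) < ∞ and set 𝔰_∞ = μ_0 Σ_{k=0}^∞ 1/(λ_k π_k). Then for every n≥0 the series Σ_{j=n}^∞ 1/(a_j P_j(0) P_{j+1}(0)) converges and −( Σ_{j=n}^∞ 1/(a_j P_j(0) P_{j+1}(0)) ) · P_n(0) = (−1)^n (√π_n/(1+𝔰_∞)) Σ_{j=n}^∞ 1/(λ_j π_j). -/

import Mathlib

open Finset Filter Topology

/-- Lemma 3.2, convergent case: assuming `Σ_j 1/(λ_j π_j) < ∞`, with
`𝔰_∞ = μ_0 Σ_{k=0}^∞ 1/(λ_k π_k)`, for every `n ≥ 0` the tail series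
`Σ_{j=n}^∞ 1/(a_j P_j(0) P_{j+1}(0))` converges and
`−(Σ_{j=n}^∞ 1/(a_j P_j(0) P_{j+1}(0))) · P_n(0)
   = (−1)^n (√π_n/(1+𝔰_∞)) Σ_{j=n}^∞ 1/(λ_j π_j)`. -/
theorem birth_death_tail_series_summable_case
    (lam mu : ℕ → ℝ)
    (hlam : ∀ n, 0 < lam n)
    (hmu : ∀ n, 1 ≤ n → 0 < mu n)
    (hmu0 : 0 ≤ mu 0)
    (pi a s P : ℕ → ℝ)
    (hpi : ∀ n, pi n = ∏ k ∈ Finset.range n, lam k / mu (k + 1))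
    (ha : ∀ n, a n = Real.sqrt (lam n * mu (n + 1)))
    (hs : ∀ n, s n = mu 0 * ∑ k ∈ Finset.range n, 1 / (lam k * pi k))
    (hP : ∀ n, P n = (-1) ^ n * Real.sqrt (pi n) * (1 + s n))
    (hsum : Summable (fun j : ℕ => 1 / (lam j * pi j)))
    (sInf : ℝ)
    (hsInf : sInf = mu 0 * ∑' j : ℕ, 1 / (lam j * pi j)) :
    ∀ n : ℕ,
      Summable (fun j : ℕ => 1 / (a (n + j) * P (n + j) * P (n + j + 1))) ∧
      -(∑' j : ℕ, 1 / (a (n + j) * P (n + j) * P (n + j + 1))) * P n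
        = (-1) ^ n * (Real.sqrt (pi n) / (1 + sInf)) *
            ∑' j : ℕ, 1 / (lam (n + j) * pi (n + j)) := by
  set g : ℕ → ℝ := fun j => 1 / (lam j * pi j) with hg
  have hpipos : ∀ n, 0 < pi n := by
    intro n
    rw [hpi]
    exact Finset.prod_pos fun k _ => div_pos (hlam k) (hmu _ k.succ_pos)
  have hgpos : ∀ j, 0 < g j := fun j => div_pos one_pos (mul_pos (hlam j) (hpipos j))
  have hs0 : ∀ m, 0 ≤ s m := by
    intro m
    rw [hs]
    exact mul_nonneg hmu0 (Finset.sum_nonneg fun k _ => (hgpos k).le)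
  have hs1 : ∀ m, (0:ℝ) < 1 + s m := fun m => by linarith [hs0 m]
  have hsInf0 : 0 ≤ sInf := by
    rw [hsInf]; exact mul_nonneg hmu0 (tsum_nonneg fun j => (hgpos j).le)
  have hsInfpos : (0:ℝ) < 1 + sInf := by linarith
  have hstep : ∀ m, s (m+1) = s m + mu 0 * g m := by
    intro m
    rw [hs, hs, Finset.sum_range_succ, mul_add]
  have hpisucc : ∀ j, pi (j+1) = pi j * (lam j / mu (j+1)) := by
    intro j; rw [hpi, hpi, Finset.prod_range_succ]
  have hsq : ∀ j, a j * (Real.sqrt (pi j) * Real.sqrt (pi (j+1))) = lam j * pi j := by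
    intro j
    have hmuj : 0 < mu (j+1) := hmu _ j.succ_pos
    rw [ha, ← Real.sqrt_mul (hpipos j).le,
      ← Real.sqrt_mul (mul_pos (hlam j) hmuj).le]
    have heq : lam j * mu (j+1) * (pi j * pi (j+1)) = (lam j * pi j)^2 := by
      rw [hpisucc]
      field_simp
    rw [heq, Real.sqrt_sq (mul_pos (hlam j) (hpipos j)).le]
  have hkey : ∀ j, a j * P j * P (j+1)
      = -(lam j * pi j * ((1 + s j) * (1 + s (j+1)))) := by
    intro j
    have h1 : ((-1:ℝ))^j * (-1:ℝ)^(j+1) = -1 := by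
      rw [← pow_add]
      exact Odd.neg_one_pow ⟨j, by ring⟩
    calc a j * P j * P (j+1)
        = ((-1:ℝ)^j * (-1:ℝ)^(j+1)) * (a j * (Real.sqrt (pi j) * Real.sqrt (pi (j+1))))
            * ((1 + s j) * (1 + s (j+1))) := by rw [hP, hP]; ring
      _ = -(lam j * pi j * ((1 + s j) * (1 + s (j+1)))) := by rw [h1, hsq]; ring
  set t : ℕ → ℝ := fun j => g j / ((1 + s j) * (1 + s (j+1))) with ht
  have hterm : ∀ j, 1 / (a j * P j * P (j+1)) = -(t j) := by
    intro j
    rw [hkey j, ht]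
    simp only [hg]
    rw [div_div, one_div_neg_eq_neg_one_div]
  intro n
  have hgsum : Summable (fun j => g (n+j)) := by
    have := (summable_nat_add_iff n).mpr hsum
    exact this.congr fun j => by simp [hg, add_comm]
  set T := ∑' j, g (n + j) with hT
  have hsn : ∀ N, s (n+N) = s n + mu 0 * ∑ j ∈ range N, g (n+j) := by
    intro N
    induction N with
    | zero => simp
    | succ N ih =>
        rw [show n + (N+1) = (n+N) + 1 from rfl, hstep, ih, Finset.sum_range_succ]
        ring
  have hsInf_eq : sInf = s n + mu 0 * T := by
    have hsplit : (∑ i ∈ range n, g i) + ∑' i, g (i + n) = ∑' i, g i :=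
      Summable.sum_add_tsum_nat_add n hsum
    have hTeq : T = ∑' i, g (i + n) := tsum_congr fun i => by rw [add_comm]
    rw [hsInf, hs, ← hsplit, hTeq]
    ring
  have hpart : ∀ N, ∑ j ∈ range N, t (n+j)
      = (∑ j ∈ range N, g (n+j)) / ((1 + s n) * (1 + s (n+N))) := by
    intro N
    induction N with
    | zero => simp
    | succ N ih =>
        rw [Finset.sum_range_succ, Finset.sum_range_succ, ih]
        have hB : (1:ℝ) + s (n+N) = (1 + s n) + mu 0 * ∑ j ∈ range N, g (n+j) := by
          rw [hsn N]; ring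
        have hC : (1:ℝ) + s (n+(N+1)) = (1 + s n) + mu 0 * ∑ j ∈ range N, g (n+j)
            + mu 0 * g (n+N) := by
          rw [hsn (N+1), Finset.sum_range_succ]; ring
        have hA0 : (0:ℝ) < 1 + s n := hs1 n
        have hB0 : (0:ℝ) < (1 + s n) + mu 0 * ∑ j ∈ range N, g (n+j) := by
          rw [← hB]; exact hs1 _
        have hC0 : (0:ℝ) < (1 + s n) + mu 0 * ∑ j ∈ range N, g (n+j) + mu 0 * g (n+N) := by
          rw [← hC]; exact hs1 _
        have htN : t (n+N) = g (n+N) / ((1 + s (n+N)) * (1 + s (n+N+1))) := rfl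
        rw [htN, show n + N + 1 = n + (N+1) from rfl, hB, hC]
        rw [div_add_div _ _ (mul_ne_zero hA0.ne' hB0.ne') (mul_ne_zero hB0.ne' hC0.ne'),
          div_eq_div_iff (mul_ne_zero (mul_ne_zero hA0.ne' hB0.ne') (mul_ne_zero hB0.ne' hC0.ne'))
            (mul_ne_zero hA0.ne' hC0.ne')]
        ring
  have hden : ∀ j, (1:ℝ) ≤ (1 + s j) * (1 + s (j+1)) := by
    intro j
    nlinarith [hs0 j, hs0 (j+1)]
  have htsum : Summable (fun j => t (n+j)) := by
    apply Summable.of_nonneg_of_le (fun j => div_nonneg (hgpos (n+j)).le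
      (by nlinarith [hs0 (n+j), hs0 (n+j+1)])) _ hgsum
    intro j
    exact div_le_self (hgpos (n+j)).le (hden (n+j))
  have htendG : Tendsto (fun N => ∑ j ∈ range N, g (n+j)) atTop (𝓝 T) :=
    hgsum.hasSum.tendsto_sum_nat
  have htendD : Tendsto (fun N => (1 + s n) * (1 + s (n+N))) atTop
      (𝓝 ((1 + s n) * (1 + sInf))) := by
    have : Tendsto (fun N => s (n+N)) atTop (𝓝 sInf) := by
      rw [hsInf_eq]
      have h2 : Tendsto (fun N => s n + mu 0 * ∑ j ∈ range N, g (n+j)) atTop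
          (𝓝 (s n + mu 0 * T)) := tendsto_const_nhds.add (htendG.const_mul _)
      exact h2.congr fun N => (hsn N).symm
    exact tendsto_const_nhds.mul (tendsto_const_nhds.add this)
  have htendP : Tendsto (fun N => ∑ j ∈ range N, t (n+j)) atTop
      (𝓝 (T / ((1 + s n) * (1 + sInf)))) := by
    have := htendG.div htendD (mul_pos (hs1 n) hsInfpos).ne'
    exact this.congr fun N => (hpart N).symm
  have hval : ∑' j, t (n+j) = T / ((1 + s n) * (1 + sInf)) :=
    tendsto_nhds_unique htsum.hasSum.tendsto_sum_nat htendP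
  have htermn : ∀ j, 1 / (a (n+j) * P (n+j) * P (n+j+1)) = -(t (n+j)) := fun j => hterm (n+j)
  constructor
  · exact htsum.neg.congr fun j => (htermn j).symm
  · have h1 : ∑' j, 1 / (a (n+j) * P (n+j) * P (n+j+1)) = -(∑' j, t (n+j)) := by
      rw [← tsum_neg]
      exact tsum_congr htermn
    rw [h1, hval, hP n, neg_neg]
    have hA : (1 + s n) ≠ 0 := (hs1 n).ne'
    field_simp
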